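/- Let c, D > 0. For every constant A > 0 and every L ∈ ℕ there exist t > 0 and a nonzero finite Borel measure G on [0,∞) such that 0 < Σ_{l=L}^∞ (2l+1)·C_l < ∞ and (Σ_{l=L}^∞ (2l+1)·C_l(t,t))^{1/2} > A·exp(−c²t/(2D))·(Σ_{l=L}^∞ (2l+1)·C_l)^{1/2}. Consequently, no truncation error bound of the form ‖T_H(·,t) − T_{H,L}(·,t)‖_{L²(Ω×S²)} ≤ A·exp(−c²t/(2D))·(Σ_{l=L}^∞(2l+1)C_l)^{1/2} can hold uniformly over initial spectral measures G. -/

import Mathlib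

open MeasureTheory Real Set

/-- `H̃₁(μ,t)` for the subcritical regime `0 ≤ μ < c/(2D)`. -/
noncomputable def Htilde1 (c D μ t : ℝ) : ℝ :=
  Real.exp (-(c ^ 2 * t) / (2 * D)) *
    (Real.cosh (c * t * Real.sqrt (c ^ 2 / (4 * D ^ 2) - μ ^ 2)) +
      c / (2 * D * Real.sqrt (c ^ 2 / (4 * D ^ 2) - μ ^ 2)) *
        Real.sinh (c * t * Real.sqrt (c ^ 2 / (4 * D ^ 2) - μ ^ 2)))

/-- `H̃₂(μ,t)` for the supercritical regime `μ > c/(2D)`. -/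
noncomputable def Htilde2 (c D μ t : ℝ) : ℝ :=
  Real.exp (-(c ^ 2 * t) / (2 * D)) *
    (Real.cos (c * t * Real.sqrt (μ ^ 2 - c ^ 2 / (4 * D ^ 2))) +
      c / (2 * D * Real.sqrt (μ ^ 2 - c ^ 2 / (4 * D ^ 2))) *
        Real.sin (c * t * Real.sqrt (μ ^ 2 - c ^ 2 / (4 * D ^ 2))))

/-- `H̃(μ,t)`, pieced together from `H̃₁`, the value at `μ = c/(2D)`, and `H̃₂`. -/
noncomputable def Htilde (c D μ t : ℝ) : ℝ :=
  if μ < c / (2 * D) then Htilde1 c D μ t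
  else if μ = c / (2 * D) then Real.exp (-(c ^ 2 * t) / (2 * D)) * (1 + c ^ 2 * t / (2 * D))
  else Htilde2 c D μ t

/-- Bessel function of the first kind of real order `ν`, via its power series
(with real powers; for `ν > 0` this gives `besselJ ν 0 = 0`). -/
noncomputable def besselJ (ν x : ℝ) : ℝ :=
  ∑' n : ℕ, ((-1 : ℝ) ^ n / (n.factorial * Real.Gamma ((n : ℝ) + ν + 1))) *
    (x / 2) ^ (2 * (n : ℝ) + ν)

/-- The integrand `J_{l+1/2}(μ)² / μ`, with its value at `μ = 0` defined by
continuous extension (`2/π` for `l = 0`, `0` for `l ≥ 1`). -/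
noncomputable def besselInt (l : ℕ) (μ : ℝ) : ℝ :=
  if μ = 0 then (if l = 0 then 2 / Real.pi else 0)
  else besselJ ((l : ℝ) + 1 / 2) μ ^ 2 / μ

/-- Angular power spectrum `C_l(t,t')` of the spherical hyperbolic diffusion field. -/
noncomputable def Cl (c D : ℝ) (G : MeasureTheory.Measure ℝ) (l : ℕ) (t t' : ℝ) : ℝ :=
  2 * Real.pi ^ 2 * ∫ μ in Set.Ici (0 : ℝ), besselInt l μ * Htilde c D μ t * Htilde c D μ t' ∂G

lemma gamma_ge (ν : ℝ) (hν : 0 ≤ ν) (n : ℕ) :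
    Real.Gamma (ν + 1) ≤ Real.Gamma (ν + 1 + n) := by
  induction n with
  | zero => simp
  | succ k ih =>
    have h1 : (0:ℝ) < ν + 1 + k := by positivity
    have : Real.Gamma (ν + 1 + (k+1)) = (ν + 1 + k) * Real.Gamma (ν + 1 + k) := by
      have := Real.Gamma_add_one (s := ν + 1 + k) (by positivity)
      rw [← this]; ring_nf
    rw [show ((k+1 : ℕ) : ℝ) = (k:ℝ) + 1 by push_cast; ring, this]
    have hpos : 0 < Real.Gamma (ν + 1 + k) := Real.Gamma_pos_of_pos h1
    nlinarith [Real.Gamma_pos_of_pos (show (0:ℝ) < ν + 1 by linarith)]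


lemma besselJ_bounds (ν μ : ℝ) (hν : 0 ≤ ν) (h0 : 0 < μ) (h1 : μ ≤ 1) :
    (2/3) * ((μ/2) ^ ν / Real.Gamma (ν+1)) ≤ besselJ ν μ ∧
      besselJ ν μ ≤ (4/3) * ((μ/2) ^ ν / Real.Gamma (ν+1)) ∧
      Summable (fun n : ℕ => ((-1 : ℝ) ^ n / (n.factorial * Real.Gamma ((n : ℝ) + ν + 1))) *
        (μ / 2) ^ (2 * (n : ℝ) + ν)) := by
  have hK : 0 < Real.Gamma (ν + 1) := Real.Gamma_pos_of_pos (by linarith)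
  set K := Real.Gamma (ν + 1) with hKdef
  set a0 : ℝ := (μ/2) ^ ν / K with ha0def
  have hhalf : (0:ℝ) < μ/2 := by linarith
  have ha0 : 0 < a0 := div_pos (Real.rpow_pos_of_pos hhalf ν) hK
  set f : ℕ → ℝ := fun n => ((-1 : ℝ) ^ n / (n.factorial * Real.Gamma ((n : ℝ) + ν + 1))) *
    (μ / 2) ^ (2 * (n : ℝ) + ν) with hf
  have hb : ∀ n, |f n| ≤ a0 * (1/4) ^ n := by
    intro n
    have hG : 0 < Real.Gamma ((n:ℝ) + ν + 1) := Real.Gamma_pos_of_pos (by positivity)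
    have hGge : K ≤ Real.Gamma ((n:ℝ) + ν + 1) := by
      have := gamma_ge ν hν n
      rw [hKdef]; convert this using 2; ring
    have hfact : (1:ℝ) ≤ (n.factorial : ℝ) := by exact_mod_cast n.factorial_pos
    have hrpow : (μ/2) ^ (2 * (n:ℝ) + ν) = ((μ/2)^2)^n * (μ/2) ^ ν := by
      rw [Real.rpow_add hhalf]
      congr 1
      rw [show (2 * (n:ℝ)) = ((2*n : ℕ) : ℝ) by push_cast; ring, Real.rpow_natCast, pow_mul]
    have habs : |f n| = (μ/2) ^ (2 * (n:ℝ) + ν) / ((n.factorial : ℝ) * Real.Gamma ((n:ℝ) + ν + 1)) := by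
      rw [hf]
      rw [abs_mul, abs_div, abs_pow, abs_neg, abs_one, one_pow, one_div, abs_of_pos (by positivity),
        abs_of_pos (Real.rpow_pos_of_pos hhalf _)]
      ring
    rw [habs, hrpow]
    have hsq : ((μ/2)^2 : ℝ) ^ n ≤ (1/4) ^ n := by
      apply pow_le_pow_left₀ (by positivity)
      nlinarith
    have h2 : (μ/2) ^ ν / ((n.factorial : ℝ) * Real.Gamma ((n:ℝ) + ν + 1)) ≤ a0 := by
      rw [ha0def]
      apply div_le_div_of_nonneg_left (le_of_lt (Real.rpow_pos_of_pos hhalf ν)) hK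
      calc K ≤ Real.Gamma ((n:ℝ) + ν + 1) := hGge
        _ ≤ (n.factorial : ℝ) * Real.Gamma ((n:ℝ) + ν + 1) := le_mul_of_one_le_left hG.le hfact
    calc ((μ/2)^2)^n * (μ/2) ^ ν / ((n.factorial : ℝ) * Real.Gamma ((n:ℝ) + ν + 1))
        = ((μ/2)^2)^n * ((μ/2) ^ ν / ((n.factorial : ℝ) * Real.Gamma ((n:ℝ) + ν + 1))) := by ring
      _ ≤ (1/4)^n * a0 := by
          apply mul_le_mul hsq h2 (by positivity) (by positivity)
      _ = a0 * (1/4)^n := by ring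
  have hgsum : Summable (fun n : ℕ => a0 * (1/4:ℝ) ^ n) :=
    (summable_geometric_of_lt_one (by norm_num) (by norm_num)).mul_left a0
  have hsum : Summable f := by
    apply Summable.of_norm
    apply Summable.of_nonneg_of_le (fun n => norm_nonneg _) (fun n => ?_) hgsum
    simpa using hb n
  have hf0 : f 0 = a0 := by
    rw [hf]
    simp only [pow_zero, Nat.cast_zero, Nat.factorial_zero, Nat.cast_one, one_mul, mul_zero,
      zero_add, zero_mul]
    rw [ha0def]; ring
  have hsplit : besselJ ν μ = f 0 + ∑' n, f (n + 1) := by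
    rw [besselJ]; exact Summable.tsum_eq_zero_add hsum
  have htail : |∑' n, f (n + 1)| ≤ a0 / 3 := by
    have hgsum' : Summable (fun n : ℕ => a0 * (1/4:ℝ) ^ (n+1)) := by
      have he : (fun n : ℕ => a0 * (1/4:ℝ) ^ (n+1)) = fun n : ℕ => (a0 * (1/4)) * (1/4:ℝ) ^ n := by
        funext n; ring
      rw [he]; exact (summable_geometric_of_lt_one (by norm_num) (by norm_num)).mul_left _
    have hconv : Summable (fun n : ℕ => |f (n+1)|) :=
      Summable.of_nonneg_of_le (fun n => abs_nonneg _) (fun n => hb (n+1)) hgsum'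
    calc |∑' n, f (n + 1)| ≤ ∑' n, |f (n + 1)| := by
          simpa [Real.norm_eq_abs] using
            norm_tsum_le_tsum_norm (f := fun n : ℕ => f (n+1))
              (by simpa [Real.norm_eq_abs] using hconv)
      _ ≤ ∑' n : ℕ, a0 * (1/4:ℝ) ^ (n+1) := Summable.tsum_le_tsum (fun n => hb (n+1)) hconv hgsum'
      _ = a0 / 3 := by
          have : (fun n : ℕ => a0 * (1/4:ℝ) ^ (n+1)) = fun n : ℕ => (a0 * (1/4)) * (1/4:ℝ) ^ n := by
            funext n; ring
          rw [this, tsum_mul_left, tsum_geometric_of_lt_one (by norm_num) (by norm_num)]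
          ring
  have habs := abs_le.1 htail
  refine ⟨?_, ?_, hsum⟩
  · rw [hsplit, hf0]; rw [ha0def] at habs ⊢; linarith [habs.1]
  · rw [hsplit, hf0]; rw [ha0def] at habs ⊢; linarith [habs.2]

lemma besselInt_pos (k : ℕ) (μ : ℝ) (h0 : 0 < μ) (h1 : μ ≤ 1) : 0 < besselInt k μ := by
  rw [besselInt, if_neg h0.ne']
  have hGk : 0 < Real.Gamma ((k:ℝ)+1/2+1) := Real.Gamma_pos_of_pos (by positivity)
  have hl := (besselJ_bounds ((k:ℝ)+1/2) μ (by positivity) h0 h1).1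
  have hJ : 0 < besselJ ((k:ℝ)+1/2) μ := by
    refine lt_of_lt_of_le ?_ hl
    have := Real.rpow_pos_of_pos (show (0:ℝ) < μ/2 by linarith) ((k:ℝ)+1/2)
    positivity
  exact div_pos (pow_pos hJ 2) h0

lemma besselInt_le (k : ℕ) (μ : ℝ) (h0 : 0 < μ) (h1 : μ ≤ 1) :
    besselInt k μ ≤ (16/9) / (Real.Gamma (3/2) ^ 2 * μ) * (1/4:ℝ) ^ k := by
  rw [besselInt, if_neg h0.ne']
  obtain ⟨hl, hu, -⟩ := besselJ_bounds ((k:ℝ)+1/2) μ (by positivity) h0 h1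
  have hhalf : (0:ℝ) < μ/2 := by linarith
  have hG32 : 0 < Real.Gamma (3/2:ℝ) := Real.Gamma_pos_of_pos (by norm_num)
  have hGk : 0 < Real.Gamma ((k:ℝ)+1/2+1) := Real.Gamma_pos_of_pos (by positivity)
  have hJ0 : (0:ℝ) ≤ besselJ ((k:ℝ)+1/2) μ := by
    refine le_trans ?_ hl
    have := Real.rpow_pos_of_pos hhalf ((k:ℝ)+1/2)
    positivity
  have hnum : (μ/2) ^ ((k:ℝ)+1/2) ≤ (1/2:ℝ) ^ k := by
    calc (μ/2) ^ ((k:ℝ)+1/2) ≤ (μ/2) ^ ((k:ℕ):ℝ) :=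
        Real.rpow_le_rpow_of_exponent_ge hhalf (by linarith) (by push_cast; linarith)
      _ = (μ/2) ^ k := Real.rpow_natCast _ k
      _ ≤ (1/2:ℝ) ^ k := pow_le_pow_left₀ (by linarith) (by linarith) k
  have hden : Real.Gamma (3/2:ℝ) ≤ Real.Gamma ((k:ℝ)+1/2+1) := by
    have h := gamma_ge (1/2) (by norm_num) k
    calc Real.Gamma (3/2:ℝ) = Real.Gamma ((1:ℝ)/2+1) := by norm_num
      _ ≤ Real.Gamma ((1:ℝ)/2+1+k) := h
      _ = Real.Gamma ((k:ℝ)+1/2+1) := by ring_nf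
  have ha0le : (μ/2) ^ ((k:ℝ)+1/2) / Real.Gamma ((k:ℝ)+1/2+1) ≤ (1/2:ℝ)^k / Real.Gamma (3/2) :=
    div_le_div₀ (by positivity) hnum hG32 hden
  have hub : besselJ ((k:ℝ)+1/2) μ ≤ (4/3) * ((1/2:ℝ)^k / Real.Gamma (3/2)) :=
    le_trans hu (by nlinarith)
  have hsq : besselJ ((k:ℝ)+1/2) μ ^ 2 ≤ ((4/3) * ((1/2:ℝ)^k / Real.Gamma (3/2))) ^ 2 :=
    pow_le_pow_left₀ hJ0 hub 2
  calc besselJ ((k:ℝ)+1/2) μ ^ 2 / μ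
      ≤ ((4/3) * ((1/2:ℝ)^k / Real.Gamma (3/2))) ^ 2 / μ := (div_le_div_iff_of_pos_right h0).2 hsq
    _ = (16/9) / (Real.Gamma (3/2) ^ 2 * μ) * (1/4:ℝ) ^ k := by
        rw [mul_pow, div_pow, div_pow, pow_right_comm]
        have : ((1:ℝ)/2) ^ 2 = 1/4 := by norm_num
        rw [this]
        field_simp
        ring


set_option maxHeartbeats 2000000 in
/-- No uniform truncation error bound of the form
`A·exp(−c²t/(2D))·(Σ_{l≥L}(2l+1)C_l)^{1/2}` can hold over all initial spectral
measures: for every `A > 0` and `L` there are `t > 0` and a nonzero finite measure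
`G` with `0 < Σ_{l≥L}(2l+1)C_l < ∞` and
`(Σ_{l≥L}(2l+1)C_l(t,t))^{1/2} > A·exp(−c²t/(2D))·(Σ_{l≥L}(2l+1)C_l)^{1/2}`. -/
theorem no_uniform_exponential_truncation_bound
    (c D : ℝ) (hc : 0 < c) (hD : 0 < D) :
    ∀ A : ℝ, 0 < A → ∀ L : ℕ,
      ∃ t : ℝ, 0 < t ∧
        ∃ G : MeasureTheory.Measure ℝ, MeasureTheory.IsFiniteMeasure G ∧ G ≠ 0 ∧
          G (Set.Iio 0) = 0 ∧
          (Summable fun l : ℕ => (2 * ((L + l : ℕ) : ℝ) + 1) * Cl c D G (L + l) 0 0) ∧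
          0 < ∑' l : ℕ, (2 * ((L + l : ℕ) : ℝ) + 1) * Cl c D G (L + l) 0 0 ∧
          Real.sqrt (∑' l : ℕ, (2 * ((L + l : ℕ) : ℝ) + 1) * Cl c D G (L + l) t t)
            > A * Real.exp (-(c ^ 2 * t) / (2 * D)) *
              Real.sqrt (∑' l : ℕ, (2 * ((L + l : ℕ) : ℝ) + 1) * Cl c D G (L + l) 0 0) := by
  classical
  intro A hA L
  set μ₀ : ℝ := min 1 (c/(4*D)) with hμdef
  have hμ0 : (0:ℝ) < μ₀ := lt_min one_pos (by positivity)
  have hμ1 : μ₀ ≤ 1 := min_le_left _ _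
  have hμc : μ₀ ≤ c/(4*D) := min_le_right _ _
  clear_value μ₀
  have hβsq : 0 < c^2/(4*D^2) - μ₀^2 := by
    have h1 : μ₀^2 ≤ (c/(4*D))^2 := pow_le_pow_left₀ hμ0.le hμc 2
    have h2 : (c/(4*D))^2 < c^2/(4*D^2) := by
      rw [div_pow, div_lt_div_iff₀ (by positivity) (by positivity)]
      nlinarith [sq_nonneg c, sq_nonneg D, mul_pos hc hD]
    linarith
  set β := Real.sqrt (c^2/(4*D^2) - μ₀^2) with hβdef
  have hβ : 0 < β := Real.sqrt_pos.2 hβsq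
  clear_value β
  have hμlt : μ₀ < c/(2*D) := by
    by_contra h
    push_neg at h
    have : (c/(2*D))^2 ≤ μ₀^2 := pow_le_pow_left₀ (by positivity) h 2
    have he : (c/(2*D))^2 = c^2/(4*D^2) := by
      rw [div_pow]; congr 1; ring
    linarith [he ▸ this]
  set t := (|Real.log (2*A)| + 1)/(c*β) with htdef
  have ht : 0 < t := div_pos (by positivity) (mul_pos hc hβ)
  clear_value t
  set G : Measure ℝ := Measure.dirac μ₀ with hGdef
  clear_value G
  have hH0 : Htilde c D μ₀ 0 = 1 := by
    simp [Htilde, if_pos hμlt, Htilde1]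
  have hCl : ∀ (l : ℕ) (t₁ t₂ : ℝ), Cl c D G l t₁ t₂ =
      2 * Real.pi ^ 2 * (besselInt l μ₀ * Htilde c D μ₀ t₁ * Htilde c D μ₀ t₂) := by
    intro l t₁ t₂
    rw [Cl, hGdef, setIntegral_dirac, if_pos (show μ₀ ∈ Set.Ici (0:ℝ) from hμ0.le)]
  -- the base series
  set s : ℕ → ℝ := fun l => (2 * ((L + l : ℕ) : ℝ) + 1) * (2 * Real.pi ^ 2 * besselInt (L + l) μ₀)
    with hsdef
  clear_value s
  have hs_nonneg : ∀ l, 0 ≤ s l := by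
    intro l
    rw [hsdef]
    have := besselInt_pos (L + l) μ₀ hμ0 hμ1
    positivity
  have hG32 : 0 < Real.Gamma (3/2:ℝ) := Real.Gamma_pos_of_pos (by norm_num)
  have hs_summable : Summable s := by
    set B : ℝ := (16/9) / (Real.Gamma (3/2) ^ 2 * μ₀) with hBdef
    have hB : 0 < B := by positivity
    clear_value B
    have hbound : ∀ l : ℕ, s l ≤ ((2*(L:ℝ)+3) * (2*Real.pi^2) * B) * (((l:ℝ)+1) * (1/4)^l) := by
      intro l
      have h1 : besselInt (L + l) μ₀ ≤ B * (1/4:ℝ)^(L+l) := by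
        rw [hBdef]; exact besselInt_le (L+l) μ₀ hμ0 hμ1
      have h2 : (1/4:ℝ)^(L+l) ≤ (1/4:ℝ)^l := by
        rw [pow_add]
        have : (1/4:ℝ)^L ≤ 1 := pow_le_one₀ (by norm_num) (by norm_num)
        nlinarith [pow_pos (show (0:ℝ) < 1/4 by norm_num) l, pow_nonneg (show (0:ℝ) ≤ 1/4 by norm_num) L]
      have h3 : besselInt (L + l) μ₀ ≤ B * (1/4:ℝ)^l :=
        le_trans h1 (by nlinarith)
      have h4 : (2 * ((L + l : ℕ) : ℝ) + 1) ≤ (2*(L:ℝ)+3) * ((l:ℝ)+1) := by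
        push_cast; nlinarith [Nat.cast_nonneg (α := ℝ) l, Nat.cast_nonneg (α := ℝ) L]
      have h5 : 0 ≤ besselInt (L + l) μ₀ := (besselInt_pos (L + l) μ₀ hμ0 hμ1).le
      have h6 : (0:ℝ) ≤ (2 * ((L + l : ℕ) : ℝ) + 1) := by positivity
      calc s l ≤ (2 * ((L + l : ℕ) : ℝ) + 1) * (2 * Real.pi ^ 2 * (B * (1/4:ℝ)^l)) := by
            rw [hsdef]
            apply mul_le_mul_of_nonneg_left _ h6
            have : (0:ℝ) < 2 * Real.pi^2 := by positivity
            nlinarith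
        _ ≤ ((2*(L:ℝ)+3) * ((l:ℝ)+1)) * (2 * Real.pi ^ 2 * (B * (1/4:ℝ)^l)) := by
            apply mul_le_mul_of_nonneg_right h4
            positivity
        _ = ((2*(L:ℝ)+3) * (2*Real.pi^2) * B) * (((l:ℝ)+1) * (1/4)^l) := by ring
    have hgs : Summable (fun l : ℕ => ((l:ℝ)+1) * (1/4:ℝ)^l) := by
      have h1 : Summable (fun l : ℕ => (l:ℝ) * (1/4:ℝ)^l) := by
        simpa using summable_pow_mul_geometric_of_norm_lt_one (R := ℝ) 1
          (r := (1/4:ℝ)) (by rw [Real.norm_eq_abs, abs_of_pos (by norm_num : (0:ℝ) < 1/4)]; norm_num)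
      have h2 : Summable (fun l : ℕ => (1/4:ℝ)^l) :=
        summable_geometric_of_lt_one (by norm_num) (by norm_num)
      have := h1.add h2
      convert this using 2 with l
      ring
    exact Summable.of_nonneg_of_le hs_nonneg hbound (hgs.mul_left _)
  have hterm0 : ∀ l : ℕ, (2 * ((L + l : ℕ) : ℝ) + 1) * Cl c D G (L + l) 0 0 = s l := by
    intro l; rw [hCl, hH0, hsdef]; ring
  have hSsum : Summable (fun l : ℕ => (2 * ((L + l : ℕ) : ℝ) + 1) * Cl c D G (L + l) 0 0) := by
    exact hs_summable.congr (fun l => (hterm0 l).symm)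
  have hSpos : 0 < ∑' l : ℕ, (2 * ((L + l : ℕ) : ℝ) + 1) * Cl c D G (L + l) 0 0 := by
    rw [tsum_congr hterm0]
    have hs0 : 0 < s 0 := by
      rw [hsdef]
      simp only
      have := besselInt_pos (L + 0) μ₀ hμ0 hμ1
      positivity
    calc (0:ℝ) < s 0 := hs0
      _ ≤ ∑' l, s l := Summable.le_tsum hs_summable 0 (fun j _ => hs_nonneg j)
  -- value of Htilde at time t
  have hexp : 0 < Real.exp (-(c ^ 2 * t) / (2 * D)) := Real.exp_pos _
  have hHt : A * Real.exp (-(c ^ 2 * t) / (2 * D)) < Htilde c D μ₀ t := by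
    rw [Htilde, if_pos hμlt, Htilde1, ← hβdef]
    have hctβ : c * t * β = |Real.log (2*A)| + 1 := by
      rw [htdef]; field_simp
    have hcosh : A < Real.cosh (c * t * β) := by
      rw [hctβ, Real.cosh_eq]
      have h1 : Real.log (2*A) < |Real.log (2*A)| + 1 := by
        cases abs_cases (Real.log (2*A)) with
        | inl h => linarith [h.1]
        | inr h => linarith [h.1, abs_nonneg (Real.log (2*A))]
      have h2 : (2*A : ℝ) < Real.exp (|Real.log (2*A)| + 1) := by
        calc (2*A : ℝ) = Real.exp (Real.log (2*A)) := (Real.exp_log (by linarith)).symm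
          _ < Real.exp (|Real.log (2*A)| + 1) := Real.exp_lt_exp.2 h1
      have h3 : 0 < Real.exp (-(|Real.log (2*A)| + 1)) := Real.exp_pos _
      linarith
    have hsinh : 0 < Real.sinh (c * t * β) := by
      rw [Real.sinh_pos_iff, hctβ]
      linarith [abs_nonneg (Real.log (2*A))]
    have hcoef : 0 < c / (2 * D * β) := by positivity
    calc A * Real.exp (-(c ^ 2 * t) / (2 * D))
        = Real.exp (-(c ^ 2 * t) / (2 * D)) * A := by ring
      _ < Real.exp (-(c ^ 2 * t) / (2 * D)) *
          (Real.cosh (c * t * β) + c / (2 * D * β) * Real.sinh (c * t * β)) := by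
          have := mul_pos hcoef hsinh
          apply mul_lt_mul_of_pos_left (by linarith) hexp
  have hHtpos : 0 < Htilde c D μ₀ t := lt_trans (by positivity) hHt
  -- assemble
  refine ⟨t, ht, G, by rw [hGdef]; infer_instance, ?_, ?_, hSsum, hSpos, ?_⟩
  · rw [hGdef]
    exact MeasureTheory.Measure.dirac_ne_zero
  · rw [hGdef, Measure.dirac_apply' _ measurableSet_Iio]
    simp [Set.indicator_of_notMem, not_lt.2 hμ0.le]
  · have htt : ∀ l : ℕ, (2 * ((L + l : ℕ) : ℝ) + 1) * Cl c D G (L + l) t t =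
        (Htilde c D μ₀ t * Htilde c D μ₀ t) * s l := by
      intro l; rw [hCl]; simp only [hsdef]; ring
    rw [tsum_congr htt, tsum_mul_left, tsum_congr hterm0]
    have hS : 0 < ∑' l, s l := by rw [← tsum_congr hterm0]; exact hSpos
    have hsqrt : Real.sqrt (Htilde c D μ₀ t * Htilde c D μ₀ t * ∑' l, s l) =
        Htilde c D μ₀ t * Real.sqrt (∑' l, s l) := by
      rw [Real.sqrt_mul (mul_self_nonneg _), Real.sqrt_mul_self hHtpos.le]
    rw [hsqrt]
    have : ∑' l : ℕ, (2 * ((L + l : ℕ) : ℝ) + 1) * Cl c D G (L + l) 0 0 = ∑' l, s l := tsum_congr hterm0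
    calc A * Real.exp (-(c ^ 2 * t) / (2 * D)) * Real.sqrt (∑' l, s l)
        < Htilde c D μ₀ t * Real.sqrt (∑' l, s l) := by
          apply mul_lt_mul_of_pos_right hHt (Real.sqrt_pos.2 hS)
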